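/- A ring R is idempotent reflexive if and only if the polynomial ring R[x] is idempotent reflexive. -/

import Mathlib

section Defs

variable (S : Type*) [Ring S]

/-- `S` is right idempotent reflexive: `aSe = 0` implies `eSa = 0` for idempotent `e`. -/
def RightIdemReflexive : Prop :=
  ∀ a e : S, e * e = e → (∀ r : S, a * r * e = 0) → ∀ r : S, e * r * a = 0

/-- `S` is left idempotent reflexive: `eSa = 0` implies `aSe = 0` for idempotent `e`. -/
def LeftIdemReflexive : Prop :=
  ∀ a e : S, e * e = e → (∀ r : S, e * r * a = 0) → ∀ r : S, a * r * e = 0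

/-- `S` is idempotent reflexive if it is both left and right idempotent reflexive. -/
def IdemReflexive : Prop := LeftIdemReflexive S ∧ RightIdemReflexive S

/-- `S` is abelian if every idempotent is central. -/
def IsAbelianRing : Prop := ∀ e : S, e * e = e → ∀ r : S, e * r = r * e

end Defs

section Aux

open Polynomial Finset

variable {R : Type*} [Ring R]

private lemma idemref_e0 (e : ℕ → R)
    (he : ∀ n, ∑ p ∈ Finset.HasAntidiagonal.antidiagonal n, e p.1 * e p.2 = e n) :
    e 0 * e 0 = e 0 := by simpa using he 0

private lemma idemref_keyR (a e : ℕ → R)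
    (he : ∀ n, ∑ p ∈ Finset.HasAntidiagonal.antidiagonal n, e p.1 * e p.2 = e n)
    (H : ∀ (r : R) (n : ℕ), ∑ p ∈ Finset.HasAntidiagonal.antidiagonal n, a p.1 * r * e p.2 = 0) :
    ∀ (n i j : ℕ), i + j = n → ∀ r : R, a i * r * e j = 0 := by
  intro n
  induction n using Nat.strong_induction_on with
  | _ n IH =>
    intro i j hij r
    rcases Nat.eq_zero_or_pos j with hj | hj
    · subst hj
      have hi : i = n := by omega
      rw [hi]
      have h := H (r * e 0) n
      rw [Finset.sum_eq_single_of_mem (n, 0) (by simp) ?_] at h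
      · have h2 : a n * r * (e 0 * e 0) = 0 := by rw [← h]; noncomm_ring
        rwa [idemref_e0 e he] at h2
      · intro b hb hne
        have hb' : b.1 + b.2 = n := Finset.HasAntidiagonal.mem_antidiagonal.mp hb
        have hb2 : 0 < b.2 := by
          rcases Nat.eq_zero_or_pos b.2 with h2 | h2
          · exact absurd (Prod.ext (by omega) h2) hne
          · exact h2
        have hz : a b.1 * r * e 0 = 0 := IH b.1 (by omega) b.1 0 rfl r
        have : a b.1 * (r * e 0) * e b.2 = (a b.1 * r * e 0) * e b.2 := by noncomm_ring
        rw [this, hz, zero_mul]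
    · rw [← he j, Finset.mul_sum]
      apply Finset.sum_eq_zero
      intro p hp
      have hp' : p.1 + p.2 = j := Finset.HasAntidiagonal.mem_antidiagonal.mp hp
      rcases Nat.eq_zero_or_pos p.2 with h2 | h2
      · have h1 : p.1 = j := by omega
        have hz : a i * (r * e j) * e 0 = 0 := IH i (by omega) i 0 rfl (r * e j)
        rw [h1, h2]
        have : a i * r * (e j * e 0) = a i * (r * e j) * e 0 := by noncomm_ring
        rw [this, hz]
      · have hz : a i * r * e p.1 = 0 := IH (i + p.1) (by omega) i p.1 rfl r
        have : a i * r * (e p.1 * e p.2) = (a i * r * e p.1) * e p.2 := by noncomm_ring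
        rw [this, hz, zero_mul]

private lemma idemref_keyL (a e : ℕ → R)
    (he : ∀ n, ∑ p ∈ Finset.HasAntidiagonal.antidiagonal n, e p.1 * e p.2 = e n)
    (H : ∀ (r : R) (n : ℕ), ∑ p ∈ Finset.HasAntidiagonal.antidiagonal n, e p.1 * r * a p.2 = 0) :
    ∀ (n j i : ℕ), j + i = n → ∀ r : R, e j * r * a i = 0 := by
  intro n
  induction n using Nat.strong_induction_on with
  | _ n IH =>
    intro j i hij r
    rcases Nat.eq_zero_or_pos j with hj | hj
    · subst hj
      have hi : i = n := by omega
      rw [hi]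
      have h := H (e 0 * r) n
      rw [Finset.sum_eq_single_of_mem (0, n) (by simp) ?_] at h
      · have h2 : (e 0 * e 0) * r * a n = 0 := by rw [← h]; noncomm_ring
        rwa [idemref_e0 e he] at h2
      · intro b hb hne
        have hb' : b.1 + b.2 = n := Finset.HasAntidiagonal.mem_antidiagonal.mp hb
        have hb1 : 0 < b.1 := by
          rcases Nat.eq_zero_or_pos b.1 with h2 | h2
          · exact absurd (Prod.ext h2 (by omega)) hne
          · exact h2
        have hz : e 0 * r * a b.2 = 0 := IH b.2 (by omega) 0 b.2 (by omega) r
        have : e b.1 * (e 0 * r) * a b.2 = e b.1 * (e 0 * r * a b.2) := by noncomm_ring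
        rw [this, hz, mul_zero]
    · rw [← he j, Finset.sum_mul, Finset.sum_mul]
      apply Finset.sum_eq_zero
      intro p hp
      have hp' : p.1 + p.2 = j := Finset.HasAntidiagonal.mem_antidiagonal.mp hp
      rcases Nat.eq_zero_or_pos p.1 with h1 | h1
      · have h2 : p.2 = j := by omega
        have hz : e 0 * (e j * r) * a i = 0 := IH i (by omega) 0 i (by omega) (e j * r)
        rw [h1, h2]
        have : (e 0 * e j) * r * a i = e 0 * (e j * r) * a i := by noncomm_ring
        rw [this, hz]
      · have hz : e p.2 * r * a i = 0 := IH (p.2 + i) (by omega) p.2 i rfl r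
        have : (e p.1 * e p.2) * r * a i = e p.1 * (e p.2 * r * a i) := by noncomm_ring
        rw [this, hz, mul_zero]

private lemma idemref_key2R (hR : RightIdemReflexive R) (a e : ℕ → R)
    (he : ∀ n, ∑ p ∈ Finset.HasAntidiagonal.antidiagonal n, e p.1 * e p.2 = e n)
    (hae : ∀ i j : ℕ, ∀ r : R, a i * r * e j = 0) :
    ∀ (j i : ℕ) (r : R), e j * r * a i = 0 := by
  have h0 : ∀ (i : ℕ) (r : R), e 0 * r * a i = 0 := fun i =>
    hR (a i) (e 0) (idemref_e0 e he) (fun r => hae i 0 r)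
  intro j
  induction j using Nat.strong_induction_on with
  | _ j IH =>
    intro i r
    rw [← he j, Finset.sum_mul, Finset.sum_mul]
    apply Finset.sum_eq_zero
    intro p hp
    have hp' : p.1 + p.2 = j := Finset.HasAntidiagonal.mem_antidiagonal.mp hp
    rcases Nat.eq_zero_or_pos p.1 with h1 | h1
    · rw [h1]
      have : (e 0 * e p.2) * r * a i = e 0 * (e p.2 * r) * a i := by noncomm_ring
      rw [this, h0]
    · have hz : e p.2 * r * a i = 0 := IH p.2 (by omega) i r
      have : (e p.1 * e p.2) * r * a i = e p.1 * (e p.2 * r * a i) := by noncomm_ring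
      rw [this, hz, mul_zero]

private lemma idemref_key2L (hL : LeftIdemReflexive R) (a e : ℕ → R)
    (he : ∀ n, ∑ p ∈ Finset.HasAntidiagonal.antidiagonal n, e p.1 * e p.2 = e n)
    (hea : ∀ j i : ℕ, ∀ r : R, e j * r * a i = 0) :
    ∀ (i j : ℕ) (r : R), a i * r * e j = 0 := by
  have h0 : ∀ (i : ℕ) (r : R), a i * r * e 0 = 0 := fun i =>
    hL (a i) (e 0) (idemref_e0 e he) (fun r => hea 0 i r)
  intro i j
  induction j using Nat.strong_induction_on with
  | _ j IH =>
    intro r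
    rw [← he j, Finset.mul_sum]
    apply Finset.sum_eq_zero
    intro p hp
    have hp' : p.1 + p.2 = j := Finset.HasAntidiagonal.mem_antidiagonal.mp hp
    rcases Nat.eq_zero_or_pos p.2 with h2 | h2
    · rw [h2]
      have : a i * r * (e p.1 * e 0) = (a i * (r * e p.1)) * e 0 := by noncomm_ring
      rw [this, h0]
    · have hz : a i * r * e p.1 = 0 := IH p.1 (by omega) r
      have : a i * r * (e p.1 * e p.2) = (a i * r * e p.1) * e p.2 := by noncomm_ring
      rw [this, hz, zero_mul]

private lemma idemref_coeff_idem {E : R[X]} (hE : E * E = E) :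
    ∀ n, ∑ p ∈ Finset.HasAntidiagonal.antidiagonal n, E.coeff p.1 * E.coeff p.2 = E.coeff n := by
  intro n
  rw [← Polynomial.coeff_mul, hE]

private lemma idemref_polyR (hR : RightIdemReflexive R) :
    RightIdemReflexive (Polynomial R) := by
  intro f E hE hf g
  have he := idemref_coeff_idem hE
  have H : ∀ (r : R) (n : ℕ),
      ∑ p ∈ Finset.HasAntidiagonal.antidiagonal n, f.coeff p.1 * r * E.coeff p.2 = 0 := by
    intro r n
    have h := congrArg (fun q : R[X] => q.coeff n) (hf (C r))
    simp only [coeff_zero] at h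
    rw [← h, Polynomial.coeff_mul]
    refine Finset.sum_congr rfl fun p hp => ?_
    rw [Polynomial.coeff_mul_C]
  have hae : ∀ i j : ℕ, ∀ r : R, f.coeff i * r * E.coeff j = 0 :=
    fun i j r => idemref_keyR _ _ he H (i + j) i j rfl r
  have hea := idemref_key2R hR (f.coeff) (E.coeff) he hae
  ext n
  rw [coeff_zero, Polynomial.coeff_mul]
  refine Finset.sum_eq_zero fun p hp => ?_
  rw [Polynomial.coeff_mul, Finset.sum_mul]
  exact Finset.sum_eq_zero fun q hq => hea q.1 p.2 (g.coeff q.2)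

private lemma idemref_polyL (hL : LeftIdemReflexive R) :
    LeftIdemReflexive (Polynomial R) := by
  intro f E hE hf g
  have he := idemref_coeff_idem hE
  have H : ∀ (r : R) (n : ℕ),
      ∑ p ∈ Finset.HasAntidiagonal.antidiagonal n, E.coeff p.1 * r * f.coeff p.2 = 0 := by
    intro r n
    have h := congrArg (fun q : R[X] => q.coeff n) (hf (C r))
    simp only [coeff_zero] at h
    rw [← h, Polynomial.coeff_mul]
    refine Finset.sum_congr rfl fun p hp => ?_
    rw [Polynomial.coeff_mul_C]
  have hea : ∀ j i : ℕ, ∀ r : R, E.coeff j * r * f.coeff i = 0 :=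
    fun j i r => idemref_keyL _ _ he H (j + i) j i rfl r
  have hae := idemref_key2L hL (f.coeff) (E.coeff) he hea
  ext n
  rw [coeff_zero, Polynomial.coeff_mul]
  refine Finset.sum_eq_zero fun p hp => ?_
  rw [Polynomial.coeff_mul, Finset.sum_mul]
  exact Finset.sum_eq_zero fun q hq => hae q.1 p.2 (g.coeff q.2)

end Aux

theorem stmt11 {R : Type*} [Ring R] :
    IdemReflexive R ↔ IdemReflexive (Polynomial R) := by
  open Polynomial in
  constructor
  · rintro ⟨hL, hR⟩
    exact ⟨idemref_polyL hL, idemref_polyR hR⟩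
  · rintro ⟨hL, hR⟩
    constructor
    · intro a e he h r
      have hCe : (C e : R[X]) * C e = C e := by rw [← C_mul, he]
      have h1 : ∀ g : R[X], C e * g * C a = 0 := by
        intro g
        ext n
        rw [coeff_zero, Polynomial.coeff_mul_C, Polynomial.coeff_C_mul]
        exact h (g.coeff n)
      have h2 := hL (C a) (C e) hCe h1 (C r)
      have h3 : (C (a * r * e) : R[X]) = 0 := by rw [map_mul, map_mul]; exact h2
      exact Polynomial.C_eq_zero.mp h3
    · intro a e he h r
      have hCe : (C e : R[X]) * C e = C e := by rw [← C_mul, he]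
      have h1 : ∀ g : R[X], C a * g * C e = 0 := by
        intro g
        ext n
        rw [coeff_zero, Polynomial.coeff_mul_C, Polynomial.coeff_C_mul]
        exact h (g.coeff n)
      have h2 := hR (C a) (C e) hCe h1 (C r)
      have h3 : (C (e * r * a) : R[X]) = 0 := by rw [map_mul, map_mul]; exact h2
      exact Polynomial.C_eq_zero.mp h3
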